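/- Let π: M → B be a Riemannian submersion with totally geodesic fibers, with n = dim M and b = dim B. Then for any isometric immersion of M into a Riemannian m-manifold R^m(ε) of constant sectional curvature ε, the submersion invariant δ̆_π = τ − τ(ℋ) − τ(𝒱) satisfies δ̆_π ≤ (n²/4) H² + b(n − b) ε at every point of M. -/

import Mathlib

open scoped InnerProductSpace RealInnerProductSpace BigOperators

noncomputable section

/-- The model Euclidean `m`-space. -/
abbrev Euc (m : ℕ) : Type := EuclideanSpace ℝ (Fin m)

/-- The scalar curvature `τ(L)` of a linear subspace `L`, computed from a scalar-valued
curvature tensor `R` (convention: the sectional curvature of the plane spanned by an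
orthonormal pair `u, v` is `R u v v u`) using the standard orthonormal basis of `L`. -/
def tauSub {m : ℕ} (R : Euc m → Euc m → Euc m → Euc m → ℝ) (L : Submodule ℝ (Euc m)) : ℝ :=
  ∑ i : Fin (Module.finrank ℝ L), ∑ j : Fin (Module.finrank ℝ L),
    if i < j then
      R (stdOrthonormalBasis ℝ L i : Euc m) (stdOrthonormalBasis ℝ L j : Euc m)
        (stdOrthonormalBasis ℝ L j : Euc m) (stdOrthonormalBasis ℝ L i : Euc m)
    else 0

/-- `STuple n l` : the (unordered) tuple `l` belongs to `𝒮(n)`, i.e. all its entries are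
integers `≥ 2` which are `< n`, and their sum is at most `n`. -/
def STuple (n : ℕ) (l : List ℕ) : Prop :=
  (∀ a ∈ l, 2 ≤ a) ∧ (∀ a ∈ l, a < n) ∧ l.sum ≤ n

/-- The coefficient `c(n₁,…,n_k)`. -/
def cCoef (n : ℕ) (l : List ℕ) : ℝ :=
  ((n : ℝ) ^ 2 * ((n : ℝ) + l.length - 1 - (l.sum : ℝ))) /
    (2 * ((n : ℝ) + l.length - (l.sum : ℝ)))

/-- The coefficient `b(n₁,…,n_k)`. -/
def bCoef (n : ℕ) (l : List ℕ) : ℝ :=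
  ((n : ℝ) * ((n : ℝ) - 1) - (l.map fun a => (a : ℝ) * ((a : ℝ) - 1)).sum) / 2

/-- The set of values `τ(L₁) + ⋯ + τ(L_k)` where `L₁, …, L_k` run over all mutually
orthogonal linear subspaces of `T₀` with `dim Lⱼ = nⱼ`. -/
def tauSums {m : ℕ} (R : Euc m → Euc m → Euc m → Euc m → ℝ)
    (T₀ : Submodule ℝ (Euc m)) (l : List ℕ) : Set ℝ :=
  { s | ∃ L : Fin l.length → Submodule ℝ (Euc m),
      (∀ i, L i ≤ T₀) ∧
      (∀ i j, i ≠ j → ∀ x ∈ L i, ∀ y ∈ L j, ⟪x, y⟫_ℝ = 0) ∧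
      (∀ i, Module.finrank ℝ (L i) = l.get i) ∧
      s = ∑ i, tauSub R (L i) }

/-- The δ-invariant `δ(n₁,…,n_k)` of the "tangent space" `T₀` (with curvature tensor `R`). -/
def deltaInv {m : ℕ} (R : Euc m → Euc m → Euc m → Euc m → ℝ)
    (T₀ : Submodule ℝ (Euc m)) (l : List ℕ) : ℝ :=
  tauSub R T₀ - sInf (tauSums R T₀ l)

/-- The δ-invariant `δ̂(n₁,…,n_k)`. -/
def deltaHat {m : ℕ} (R : Euc m → Euc m → Euc m → Euc m → ℝ)
    (T₀ : Submodule ℝ (Euc m)) (l : List ℕ) : ℝ :=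
  tauSub R T₀ - sSup (tauSums R T₀ l)

/-- Pointwise data of an isometric immersion of a Riemannian `n`-manifold (with point set
`Pt`) into a Riemannian `m`-manifold: at every point, a tangent `n`-plane inside the model
Euclidean `m`-space, a (symmetric, normal-valued) second fundamental form, the curvature
tensor of the ambient manifold and the induced curvature tensor of the submanifold, the
two being related by the equation of Gauss. -/
structure ImmersionData (n m : ℕ) (Pt : Type*) where
  tang : Pt → Submodule ℝ (Euc m)
  dim_tang : ∀ p, Module.finrank ℝ (tang p) = n
  sff : Pt → Euc m →ₗ[ℝ] Euc m →ₗ[ℝ] Euc m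
  sff_symm : ∀ p x y, sff p x y = sff p y x
  sff_normal : ∀ p x y, sff p x y ∈ (tang p)ᗮ
  ambR : Pt → Euc m → Euc m → Euc m → Euc m → ℝ
  indR : Pt → Euc m → Euc m → Euc m → Euc m → ℝ
  gauss : ∀ p x y z w, x ∈ tang p → y ∈ tang p → z ∈ tang p → w ∈ tang p →
    indR p x y z w =
      ambR p x y z w + ⟪sff p x w, sff p y z⟫_ℝ - ⟪sff p x z, sff p y w⟫_ℝ

namespace ImmersionData

variable {n m : ℕ} {Pt : Type*} (I : ImmersionData n m Pt)

/-- The mean curvature vector `H⃗ = (1/n) trace h`. -/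
def meanCurv (p : Pt) : Euc m :=
  (n : ℝ)⁻¹ • ∑ i : Fin (Module.finrank ℝ (I.tang p)),
    I.sff p (stdOrthonormalBasis ℝ (I.tang p) i : Euc m)
      (stdOrthonormalBasis ℝ (I.tang p) i : Euc m)

/-- The squared mean curvature `H²`. -/
def H2 (p : Pt) : ℝ := ‖I.meanCurv p‖ ^ 2

/-- The δ-invariant `δ(n₁,…,n_k)(p)` of the submanifold. -/
def delta (l : List ℕ) (p : Pt) : ℝ := deltaInv (I.indR p) (I.tang p) l

/-- `max K̃(p)` : the maximum of the ambient sectional curvature restricted to 2-plane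
sections of the tangent space at `p`. -/
def maxAmbK (p : Pt) : ℝ :=
  sSup { c | ∃ u v : Euc m, u ∈ I.tang p ∧ v ∈ I.tang p ∧
    ‖u‖ = 1 ∧ ‖v‖ = 1 ∧ ⟪u, v⟫_ℝ = 0 ∧ c = I.ambR p u v v u }

/-- The ambient manifold is a space form of constant sectional curvature `ε`. -/
def SpaceForm (ε : ℝ) : Prop :=
  ∀ p x y z w, I.ambR p x y z w =
    ε * (⟪x, w⟫_ℝ * ⟪y, z⟫_ℝ - ⟪x, z⟫_ℝ * ⟪y, w⟫_ℝ)

/-- The immersion is minimal. -/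
def Minimal : Prop := ∀ p, I.meanCurv p = 0

/-- The trace of the second fundamental form restricted to a subspace `L`. -/
def traceSff (p : Pt) (L : Submodule ℝ (Euc m)) : Euc m :=
  ∑ i : Fin (Module.finrank ℝ L),
    I.sff p (stdOrthonormalBasis ℝ L i : Euc m) (stdOrthonormalBasis ℝ L i : Euc m)

end ImmersionData

/-- Index `a` (within `0, …, n-1`) belongs to block `blkOf l a` of the partition of
`{0,…,n-1}` into consecutive blocks of sizes `l.get 0, l.get 1, …` followed by one last
block consisting of the remaining indices (`blkOf l a = l.length` on the last block). -/
def blkOf (l : List ℕ) (a : ℕ) : ℕ :=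
  ((List.range l.length).filter fun j => (l.take (j + 1)).sum ≤ a).length

/-- Condition (a) in the equality case of the fundamental inequality: there is an adapted
orthonormal basis `e₁, …, e_m` of the ambient tangent space at `p`, whose first `n` vectors
are tangent, with respect to which all shape operators `A_{e_r}`, `r = n+1, …, m`, take the
block diagonal form `diag(A₁ʳ, …, A_kʳ, μ_r I)` with `trace A₁ʳ = ⋯ = trace A_kʳ = μ_r`. -/
def ImmersionData.ShapeAdapted {n m : ℕ} {Pt : Type*} (I : ImmersionData n m Pt)
    (l : List ℕ) (p : Pt) : Prop :=
  ∃ e : OrthonormalBasis (Fin m) ℝ (Euc m),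
    (∀ i : Fin m, (i : ℕ) < n → e i ∈ I.tang p) ∧
    ∀ r : Fin m, n ≤ (r : ℕ) → ∃ μ : ℝ,
      (∀ a b : Fin m, (a : ℕ) < n → (b : ℕ) < n → blkOf l a ≠ blkOf l b →
        ⟪I.sff p (e a) (e b), e r⟫_ℝ = 0) ∧
      (∀ a b : Fin m, (a : ℕ) < n → (b : ℕ) < n →
        blkOf l a = l.length → blkOf l b = l.length →
        ⟪I.sff p (e a) (e b), e r⟫_ℝ = if a = b then μ else 0) ∧
      (∀ j, j < l.length →
        (∑ a : Fin m, if (a : ℕ) < n ∧ blkOf l (a : ℕ) = j then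
          ⟪I.sff p (e a) (e a), e r⟫_ℝ else 0) = μ)


/-- A Riemannian submersion `π : M → B` (with totally geodesic fibers) on an
isometrically immersed Riemannian `n`-manifold `M`: at every point the tangent space
splits orthogonally into the vertical distribution `𝒱` (the kernel of the differential
`dπ` of the submersion) of dimension `n - b` and the horizontal distribution `ℋ` of
dimension `b`, on which `dπ` preserves lengths. -/
structure SubmersionImmersion (n b m : ℕ) (Pt Bs : Type*)
    extends ImmersionData n m Pt where
  π : Pt → Bs
  π_surj : Function.Surjective π
  dπ : Pt → Euc m →ₗ[ℝ] Euc b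
  Hdist : Pt → Submodule ℝ (Euc m)
  Vdist : Pt → Submodule ℝ (Euc m)
  V_def : ∀ p, Vdist p = tang p ⊓ LinearMap.ker (dπ p)
  H_le : ∀ p, Hdist p ≤ tang p
  HV_orth : ∀ p, ∀ x ∈ Hdist p, ∀ y ∈ Vdist p, ⟪x, y⟫_ℝ = 0
  HV_span : ∀ p, Hdist p ⊔ Vdist p = tang p
  dim_H : ∀ p, Module.finrank ℝ (Hdist p) = b
  dim_V : ∀ p, Module.finrank ℝ (Vdist p) = n - b
  dπ_isometric : ∀ p, ∀ x ∈ Hdist p, ‖dπ p x‖ = ‖x‖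

/-- The submersion invariant `δ̆_π(p) = τ(p) - τ(ℋ_p) - τ(𝒱_p)`. -/
def SubmersionImmersion.deltaPi {n b m : ℕ} {Pt Bs : Type*}
    (S : SubmersionImmersion n b m Pt Bs) (p : Pt) : ℝ :=
  tauSub (S.indR p) (S.tang p) - tauSub (S.indR p) (S.Hdist p)
    - tauSub (S.indR p) (S.Vdist p)

lemma parseval_diag {m : ℕ} {F : Type*} [AddCommGroup F] [Module ℝ F]
    {T : Submodule ℝ (Euc m)} {ι ι' : Type*} [Fintype ι] [Fintype ι']
    (b : OrthonormalBasis ι ℝ T) (c : OrthonormalBasis ι' ℝ T)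
    (B : Euc m →ₗ[ℝ] Euc m →ₗ[ℝ] F) :
    ∑ i, B (c i : Euc m) (c i : Euc m) = ∑ k, B (b k : Euc m) (b k : Euc m) := by
  classical
  have hrep : ∀ x : T, (x : Euc m)
      = ∑ k, ⟪(b k : Euc m), (x : Euc m)⟫_ℝ • (b k : Euc m) := by
    intro x
    have h := b.sum_repr' x
    have h2 := congrArg (Submodule.subtype T) h
    simp only [map_sum, map_smul, Submodule.coe_subtype] at h2
    conv_lhs => rw [← h2]
    refine Finset.sum_congr rfl fun k _ => ?_
    rw [Submodule.coe_inner]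
  calc ∑ i, B (c i : Euc m) (c i : Euc m)
      = ∑ i, ∑ k, ∑ l, (⟪(b k : Euc m), (c i : Euc m)⟫_ℝ
          * ⟪(b l : Euc m), (c i : Euc m)⟫_ℝ) • B (b k : Euc m) (b l : Euc m) := by
        refine Finset.sum_congr rfl fun i _ => ?_
        conv_lhs => rw [hrep (c i)]
        simp only [map_sum, map_smul, LinearMap.sum_apply, LinearMap.smul_apply,
          Finset.smul_sum, smul_smul]
        rw [Finset.sum_comm]
        refine Finset.sum_congr rfl fun k _ => Finset.sum_congr rfl fun l _ => ?_
        ring_nf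
    _ = ∑ k, ∑ l, (∑ i, ⟪(b k : Euc m), (c i : Euc m)⟫_ℝ
          * ⟪(b l : Euc m), (c i : Euc m)⟫_ℝ) • B (b k : Euc m) (b l : Euc m) := by
        rw [Finset.sum_comm]
        refine Finset.sum_congr rfl fun k _ => ?_
        rw [Finset.sum_comm]
        refine Finset.sum_congr rfl fun l _ => ?_
        rw [Finset.sum_smul]
    _ = ∑ k, ∑ l, (if k = l then (1:ℝ) else 0) • B (b k : Euc m) (b l : Euc m) := by
        refine Finset.sum_congr rfl fun k _ => Finset.sum_congr rfl fun l _ => ?_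
        congr 1
        calc (∑ i, ⟪(b k : Euc m), (c i : Euc m)⟫_ℝ * ⟪(b l : Euc m), (c i : Euc m)⟫_ℝ)
            = ∑ i, ⟪b k, c i⟫_ℝ * ⟪c i, b l⟫_ℝ := by
              refine Finset.sum_congr rfl fun i _ => ?_
              rw [Submodule.coe_inner, Submodule.coe_inner,
                real_inner_comm ((b l : Euc m)) ((c i : Euc m))]
          _ = ⟪b k, b l⟫_ℝ := c.sum_inner_mul_inner _ _
          _ = if k = l then 1 else 0 := orthonormal_iff_ite.mp b.orthonormal k l
    _ = ∑ k, B (b k : Euc m) (b k : Euc m) := by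
        refine Finset.sum_congr rfl fun k _ => ?_
        simp [ite_smul]

def innerBilin {m : ℕ} (f g : Euc m →ₗ[ℝ] Euc m) : Euc m →ₗ[ℝ] Euc m →ₗ[ℝ] ℝ :=
  LinearMap.mk₂ ℝ (fun y w => ⟪f y, g w⟫_ℝ)
    (fun y₁ y₂ w => by simp [inner_add_left])
    (fun a y w => by simp [map_smul, real_inner_smul_left, Finset.mul_sum, mul_assoc])
    (fun y w₁ w₂ => by simp [inner_add_right])
    (fun a y w => by simp [map_smul, real_inner_smul_right, Finset.mul_sum, mul_left_comm])

def innerBilinL {m : ℕ} (B : Euc m →ₗ[ℝ] Euc m →ₗ[ℝ] Euc m) (w : Euc m) :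
    Euc m →ₗ[ℝ] Euc m →ₗ[ℝ] ℝ :=
  LinearMap.mk₂ ℝ (fun x z => ⟪B x w, B z w⟫_ℝ)
    (fun x₁ x₂ z => by simp [inner_add_left])
    (fun a x z => by simp [map_smul, real_inner_smul_left, Finset.mul_sum, mul_assoc])
    (fun x z₁ z₂ => by simp [inner_add_right])
    (fun a x z => by simp [map_smul, real_inner_smul_right, Finset.mul_sum, mul_left_comm])

lemma parseval_sq {m : ℕ} {T : Submodule ℝ (Euc m)} {ι ι' : Type*} [Fintype ι] [Fintype ι']
    (b : OrthonormalBasis ι ℝ T) (c : OrthonormalBasis ι' ℝ T)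
    (B : Euc m →ₗ[ℝ] Euc m →ₗ[ℝ] Euc m) :
    ∑ i, ∑ j, ⟪B (c i : Euc m) (c j : Euc m), B (c i : Euc m) (c j : Euc m)⟫_ℝ
      = ∑ k, ∑ l, ⟪B (b k : Euc m) (b l : Euc m), B (b k : Euc m) (b l : Euc m)⟫_ℝ := by
  calc ∑ i, ∑ j, ⟪B (c i : Euc m) (c j : Euc m), B (c i : Euc m) (c j : Euc m)⟫_ℝ
      = ∑ i, ∑ l, ⟪B (c i : Euc m) (b l : Euc m), B (c i : Euc m) (b l : Euc m)⟫_ℝ := by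
        refine Finset.sum_congr rfl fun i _ => ?_
        simpa [innerBilin] using
          parseval_diag b c (innerBilin (B (c i : Euc m)) (B (c i : Euc m)))
    _ = ∑ l, ∑ i, ⟪B (c i : Euc m) (b l : Euc m), B (c i : Euc m) (b l : Euc m)⟫_ℝ :=
        Finset.sum_comm
    _ = ∑ l, ∑ k, ⟪B (b k : Euc m) (b l : Euc m), B (b k : Euc m) (b l : Euc m)⟫_ℝ := by
        refine Finset.sum_congr rfl fun l _ => ?_
        simpa [innerBilinL] using parseval_diag b c (innerBilinL B (b l : Euc m))
    _ = ∑ k, ∑ l, ⟪B (b k : Euc m) (b l : Euc m), B (b k : Euc m) (b l : Euc m)⟫_ℝ :=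
        Finset.sum_comm

lemma offdiag_half {d : ℕ} (g : Fin d → Fin d → ℝ) (hsymm : ∀ i j, g i j = g j i)
    (hdiag : ∀ i, g i i = 0) :
    (∑ i, ∑ j, if i < j then g i j else 0) = (∑ i, ∑ j, g i j) / 2 := by
  have hswap : (∑ i, ∑ j, if j < i then g i j else 0)
      = ∑ i, ∑ j, if i < j then g i j else 0 := by
    rw [Finset.sum_comm]
    exact Finset.sum_congr rfl fun i _ => Finset.sum_congr rfl fun j _ => by rw [hsymm]
  have hall : (∑ i, ∑ j, if i < j then g i j else 0)
      + (∑ i, ∑ j, if j < i then g i j else 0) = ∑ i, ∑ j, g i j := by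
    rw [← Finset.sum_add_distrib]
    refine Finset.sum_congr rfl fun i _ => ?_
    rw [← Finset.sum_add_distrib]
    refine Finset.sum_congr rfl fun j _ => ?_
    rcases lt_trichotomy i j with h | h | h
    · simp [h, asymm h]
    · subst h; simp [hdiag]
    · simp [h, asymm h]
  linarith

lemma tauSub_gauss {n m : ℕ} {Pt : Type*} (I : ImmersionData n m Pt) {ε : ℝ}
    (hsf : I.SpaceForm ε) (p : Pt) (L : Submodule ℝ (Euc m)) (hL : L ≤ I.tang p) :
    tauSub (I.indR p) L
      = ε * (Module.finrank ℝ L : ℝ) * ((Module.finrank ℝ L : ℝ) - 1) / 2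
        + ‖I.traceSff p L‖ ^ 2 / 2
        - (∑ i : Fin (Module.finrank ℝ L), ∑ j : Fin (Module.finrank ℝ L),
            ⟪I.sff p (stdOrthonormalBasis ℝ L i : Euc m) (stdOrthonormalBasis ℝ L j : Euc m),
             I.sff p (stdOrthonormalBasis ℝ L i : Euc m)
               (stdOrthonormalBasis ℝ L j : Euc m)⟫_ℝ) / 2 := by
  classical
  set d := Module.finrank ℝ L with hd
  set e : Fin d → Euc m := fun i => (stdOrthonormalBasis ℝ L i : Euc m) with he
  have hmem : ∀ i, e i ∈ I.tang p := fun i => hL (SetLike.coe_mem _)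
  have hon : ∀ i j : Fin d, ⟪e i, e j⟫_ℝ = if i = j then 1 else 0 := by
    intro i j
    have h := orthonormal_iff_ite.mp (stdOrthonormalBasis ℝ L).orthonormal i j
    rwa [Submodule.coe_inner] at h
  set h : Fin d → Fin d → Euc m := fun i j => I.sff p (e i) (e j) with hh
  have hsymm' : ∀ i j, h i j = h j i := fun i j => I.sff_symm p (e i) (e j)
  have key : ∀ i j, I.indR p (e i) (e j) (e j) (e i)
      = (if i = j then 0 else ε) + ⟪h i i, h j j⟫_ℝ - ⟪h i j, h i j⟫_ℝ := by
    intro i j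
    rw [I.gauss p _ _ _ _ (hmem i) (hmem j) (hmem j) (hmem i), hsf p]
    have hsw : I.sff p (e j) (e i) = h i j := (hsymm' i j).symm
    rw [hsw]
    simp only [hon]
    by_cases hij : i = j <;> simp [hij, eq_comm, hh] <;> ring
  set g : Fin d → Fin d → ℝ := fun i j => I.indR p (e i) (e j) (e j) (e i) with hg
  have hgsymm : ∀ i j, g i j = g j i := by
    intro i j
    rw [hg]
    simp only
    rw [key, key, real_inner_comm (h i i), hsymm' i j]
    by_cases hij : i = j <;> simp [hij, eq_comm]
  have hgdiag : ∀ i, g i i = 0 := by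
    intro i
    rw [hg]; simp only
    rw [key]; simp
  have htau : tauSub (I.indR p) L = (∑ i, ∑ j, g i j) / 2 := by
    rw [← offdiag_half g hgsymm hgdiag]
    rfl
  have hsplit : (∑ i, ∑ j, g i j)
      = (∑ i : Fin d, ∑ j : Fin d, (if i = j then (0:ℝ) else ε))
        + (∑ i, ∑ j, ⟪h i i, h j j⟫_ℝ) - ∑ i, ∑ j, ⟪h i j, h i j⟫_ℝ := by
    simp only [hg]
    simp only [key]
    simp only [Finset.sum_sub_distrib, Finset.sum_add_distrib]
  have hcount : (∑ i : Fin d, ∑ j : Fin d, (if i = j then (0:ℝ) else ε))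
      = (d : ℝ) * ((d : ℝ) - 1) * ε := by
    have h1 : ∀ i : Fin d, (∑ j : Fin d, (if i = j then (0:ℝ) else ε))
        = (d : ℝ) * ε - ε := by
      intro i
      have h2 : ∀ j : Fin d, (if i = j then (0:ℝ) else ε)
          = ε - (if i = j then ε else 0) := by
        intro j; by_cases hij : i = j <;> simp [hij]
      rw [Finset.sum_congr rfl fun j _ => h2 j, Finset.sum_sub_distrib]
      simp [Finset.sum_ite_eq, mul_comm]
    rw [Finset.sum_congr rfl fun i _ => h1 i]
    simp [Finset.sum_sub_distrib, mul_comm, mul_sub, mul_assoc]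
    ring
  have htrace : (∑ i, ∑ j, ⟪h i i, h j j⟫_ℝ) = ‖I.traceSff p L‖ ^ 2 := by
    have h1 : (∑ i, ∑ j, ⟪h i i, h j j⟫_ℝ) = ⟪∑ i, h i i, ∑ j, h j j⟫_ℝ := by
      rw [sum_inner]
      exact Finset.sum_congr rfl fun i _ => (inner_sum _ _ _).symm
    rw [h1, real_inner_self_eq_norm_sq]
    rfl
  rw [htau, hsplit, hcount, htrace]
  ring

set_option maxHeartbeats 1000000 in
/-- **Theorem 13.3 (Chen)**: let `π : M → B` be a Riemannian submersion with totally
geodesic fibers, `n = dim M`, `b = dim B`.  For any isometric immersion of `M` into a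
Riemannian `m`-manifold `Rᵐ(ε)` of constant sectional curvature `ε`, the submersion
invariant satisfies `δ̆_π ≤ (n²/4) H² + b(n-b) ε` at every point of `M`. -/
theorem submersion_delta_inequality {n b m : ℕ} {Pt Bs : Type*}
    (hb : 0 < b) (hbn : b < n)
    (S : SubmersionImmersion n b m Pt Bs) (ε : ℝ)
    (hsf : S.toImmersionData.SpaceForm ε) (p : Pt) :
    S.deltaPi p ≤ ((n : ℝ) ^ 2 / 4) * S.toImmersionData.H2 p +
      (b : ℝ) * ((n : ℝ) - (b : ℝ)) * ε := by
  classical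
  have hVT : S.Vdist p ≤ S.tang p := by
    rw [S.V_def p]; exact inf_le_left
  have hHT : S.Hdist p ≤ S.tang p := S.H_le p
  set T := S.tang p with hT
  set Hs := S.Hdist p with hHs
  set Vs := S.Vdist p with hVs
  set u : Fin (Module.finrank ℝ Hs) ⊕ Fin (Module.finrank ℝ Vs) → Euc m
    := Sum.elim (fun i => ((stdOrthonormalBasis ℝ Hs i : Euc m)))
        (fun j => ((stdOrthonormalBasis ℝ Vs j : Euc m))) with hu
  have humem : ∀ i, u i ∈ T := by
    rintro (i | j)
    · exact hHT (SetLike.coe_mem _)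
    · exact hVT (SetLike.coe_mem _)
  set u' : Fin (Module.finrank ℝ Hs) ⊕ Fin (Module.finrank ℝ Vs) → T
    := fun i => ⟨u i, humem i⟩ with hu'
  have hinner : ∀ i j, ⟪u i, u j⟫_ℝ = if i = j then 1 else 0 := by
    rintro (i | i) (j | j)
    · have h := orthonormal_iff_ite.mp (stdOrthonormalBasis ℝ Hs).orthonormal i j
      rw [Submodule.coe_inner] at h
      simpa [hu] using h
    · have h := S.HV_orth p _ (SetLike.coe_mem (stdOrthonormalBasis ℝ Hs i)) _
        (SetLike.coe_mem (stdOrthonormalBasis ℝ Vs j))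
      simpa [hu] using h
    · have h := S.HV_orth p _ (SetLike.coe_mem (stdOrthonormalBasis ℝ Hs j)) _
        (SetLike.coe_mem (stdOrthonormalBasis ℝ Vs i))
      rw [real_inner_comm] at h
      simpa [hu] using h
    · have h := orthonormal_iff_ite.mp (stdOrthonormalBasis ℝ Vs).orthonormal i j
      rw [Submodule.coe_inner] at h
      simpa [hu] using h
  have horth : Orthonormal ℝ u' := by
    rw [orthonormal_iff_ite]
    intro i j
    rw [hu', Submodule.coe_inner]
    exact hinner i j
  have hmapH : Submodule.span ℝ
      (Set.range fun i => ((stdOrthonormalBasis ℝ Hs i : Euc m))) = Hs := by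
    have h1 : Submodule.map Hs.subtype
        (Submodule.span ℝ (Set.range ⇑(stdOrthonormalBasis ℝ Hs).toBasis))
        = Submodule.map Hs.subtype ⊤ := by rw [Module.Basis.span_eq]
    rw [Submodule.map_span, Submodule.map_top, Submodule.range_subtype,
      ← Set.range_comp] at h1
    simpa [Function.comp_def] using h1
  have hmapV : Submodule.span ℝ
      (Set.range fun i => ((stdOrthonormalBasis ℝ Vs i : Euc m))) = Vs := by
    have h1 : Submodule.map Vs.subtype
        (Submodule.span ℝ (Set.range ⇑(stdOrthonormalBasis ℝ Vs).toBasis))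
        = Submodule.map Vs.subtype ⊤ := by rw [Module.Basis.span_eq]
    rw [Submodule.map_span, Submodule.map_top, Submodule.range_subtype,
      ← Set.range_comp] at h1
    simpa [Function.comp_def] using h1
  have hspanu : Submodule.span ℝ (Set.range u) = T := by
    rw [hu, Set.Sum.elim_range, Submodule.span_union, hmapH, hmapV]
    exact S.HV_span p
  have hspan : ⊤ ≤ Submodule.span ℝ (Set.range u') := by
    have hmap : Submodule.map T.subtype (Submodule.span ℝ (Set.range u'))
        = Submodule.map T.subtype ⊤ := by
      rw [Submodule.map_span, ← Set.range_comp, Submodule.map_top, Submodule.range_subtype]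
      have hcomp : (T.subtype ∘ u') = u := rfl
      rw [hcomp, hspanu]
    exact (Submodule.map_injective_of_injective (Submodule.injective_subtype T) hmap).ge
  set cT : OrthonormalBasis (Fin (Module.finrank ℝ Hs) ⊕ Fin (Module.finrank ℝ Vs)) ℝ T
    := OrthonormalBasis.mk horth hspan with hcTdef
  have hcT : ∀ i, (cT i : Euc m) = u i := by
    intro i
    rw [hcTdef, OrthonormalBasis.coe_mk]
  -- trace decomposition
  have htr : S.toImmersionData.traceSff p T
      = S.toImmersionData.traceSff p Hs + S.toImmersionData.traceSff p Vs := by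
    have h1 := parseval_diag cT (stdOrthonormalBasis ℝ T) (S.sff p)
    simp only [ImmersionData.traceSff]
    rw [h1, Fintype.sum_sum_type]
    congr 1
    · exact Finset.sum_congr rfl fun i _ => by rw [hcT]; rfl
    · exact Finset.sum_congr rfl fun i _ => by rw [hcT]; rfl
  -- dimensions
  have hdT : Module.finrank ℝ T = n := S.dim_tang p
  have hdHn : Module.finrank ℝ Hs = b := S.dim_H p
  have hdVn : Module.finrank ℝ Vs = n - b := S.dim_V p
  have hcastT : ((Module.finrank ℝ T : ℕ) : ℝ) = (n : ℝ) := by rw [hdT]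
  have hcastH : ((Module.finrank ℝ Hs : ℕ) : ℝ) = (b : ℝ) := by rw [hdHn]
  have hcastV : ((Module.finrank ℝ Vs : ℕ) : ℝ) = (n : ℝ) - (b : ℝ) := by
    rw [hdVn, Nat.cast_sub hbn.le]
  have hτT := tauSub_gauss S.toImmersionData hsf p T le_rfl
  have hτH := tauSub_gauss S.toImmersionData hsf p Hs hHT
  have hτV := tauSub_gauss S.toImmersionData hsf p Vs hVT
  rw [hcastT] at hτT
  rw [hcastH] at hτH
  rw [hcastV] at hτV
  set tT := S.toImmersionData.traceSff p T with htT
  set tH := S.toImmersionData.traceSff p Hs with htH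
  set tV := S.toImmersionData.traceSff p Vs with htV
  -- squared-norm sums
  set QT : ℝ := ∑ i : Fin (Module.finrank ℝ T), ∑ j : Fin (Module.finrank ℝ T),
      ⟪S.sff p (stdOrthonormalBasis ℝ T i : Euc m) (stdOrthonormalBasis ℝ T j : Euc m),
       S.sff p (stdOrthonormalBasis ℝ T i : Euc m)
         (stdOrthonormalBasis ℝ T j : Euc m)⟫_ℝ with hQT
  set QH : ℝ := ∑ i : Fin (Module.finrank ℝ Hs), ∑ j : Fin (Module.finrank ℝ Hs),
      ⟪S.sff p (stdOrthonormalBasis ℝ Hs i : Euc m) (stdOrthonormalBasis ℝ Hs j : Euc m),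
       S.sff p (stdOrthonormalBasis ℝ Hs i : Euc m)
         (stdOrthonormalBasis ℝ Hs j : Euc m)⟫_ℝ with hQH
  set QV : ℝ := ∑ i : Fin (Module.finrank ℝ Vs), ∑ j : Fin (Module.finrank ℝ Vs),
      ⟪S.sff p (stdOrthonormalBasis ℝ Vs i : Euc m) (stdOrthonormalBasis ℝ Vs j : Euc m),
       S.sff p (stdOrthonormalBasis ℝ Vs i : Euc m)
         (stdOrthonormalBasis ℝ Vs j : Euc m)⟫_ℝ with hQV
  have hQ : QH + QV ≤ QT := by
    have h1 := parseval_sq cT (stdOrthonormalBasis ℝ T) (S.sff p)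
    have h2 : QT = ∑ k, ∑ l, ⟪S.sff p (u k) (u l), S.sff p (u k) (u l)⟫_ℝ := by
      rw [hQT, h1]
      exact Finset.sum_congr rfl fun k _ => Finset.sum_congr rfl fun l _ => by
        rw [hcT, hcT]
    rw [h2, Fintype.sum_sum_type]
    have hsplit : ∀ k : Fin (Module.finrank ℝ Hs) ⊕ Fin (Module.finrank ℝ Vs),
        (∑ l, ⟪S.sff p (u k) (u l), S.sff p (u k) (u l)⟫_ℝ)
        = (∑ l : Fin (Module.finrank ℝ Hs),
            ⟪S.sff p (u k) (u (Sum.inl l)), S.sff p (u k) (u (Sum.inl l))⟫_ℝ)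
          + ∑ l : Fin (Module.finrank ℝ Vs),
            ⟪S.sff p (u k) (u (Sum.inr l)),
              S.sff p (u k) (u (Sum.inr l))⟫_ℝ := fun k => Fintype.sum_sum_type _
    simp only [hsplit]
    rw [Finset.sum_add_distrib, Finset.sum_add_distrib]
    have hQHeq : (∑ k : Fin (Module.finrank ℝ Hs), ∑ l : Fin (Module.finrank ℝ Hs),
        ⟪S.sff p (u (Sum.inl k)) (u (Sum.inl l)),
         S.sff p (u (Sum.inl k)) (u (Sum.inl l))⟫_ℝ) = QH := by
      rw [hQH]; rfl
    have hQVeq : (∑ k : Fin (Module.finrank ℝ Vs), ∑ l : Fin (Module.finrank ℝ Vs),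
        ⟪S.sff p (u (Sum.inr k)) (u (Sum.inr l)),
         S.sff p (u (Sum.inr k)) (u (Sum.inr l))⟫_ℝ) = QV := by
      rw [hQV]; rfl
    have hc1 : (0:ℝ) ≤ ∑ k : Fin (Module.finrank ℝ Hs), ∑ l : Fin (Module.finrank ℝ Vs),
        ⟪S.sff p (u (Sum.inl k)) (u (Sum.inr l)),
         S.sff p (u (Sum.inl k)) (u (Sum.inr l))⟫_ℝ :=
      Finset.sum_nonneg fun k _ => Finset.sum_nonneg fun l _ => real_inner_self_nonneg
    have hc2 : (0:ℝ) ≤ ∑ k : Fin (Module.finrank ℝ Vs), ∑ l : Fin (Module.finrank ℝ Hs),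
        ⟪S.sff p (u (Sum.inr k)) (u (Sum.inl l)),
         S.sff p (u (Sum.inr k)) (u (Sum.inl l))⟫_ℝ :=
      Finset.sum_nonneg fun k _ => Finset.sum_nonneg fun l _ => real_inner_self_nonneg
    linarith [hQHeq, hQVeq]
  have hnne : (n : ℝ) ≠ 0 := Nat.cast_ne_zero.mpr (by omega)
  have hH2 : ((n : ℝ) ^ 2 / 4) * S.toImmersionData.H2 p = ‖tT‖ ^ 2 / 4 := by
    have hm : S.toImmersionData.meanCurv p = (n : ℝ)⁻¹ • tT := rfl
    rw [ImmersionData.H2, hm, norm_smul, Real.norm_eq_abs, abs_of_nonneg (by positivity)]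
    rw [mul_pow]
    field_simp
  have hadd : ‖tT‖ ^ 2 = ‖tH‖ ^ 2 + 2 * ⟪tH, tV⟫_ℝ + ‖tV‖ ^ 2 := by
    rw [htr]; exact norm_add_sq_real tH tV
  have hsub : (0:ℝ) ≤ ‖tH‖ ^ 2 - 2 * ⟪tH, tV⟫_ℝ + ‖tV‖ ^ 2 := by
    have h := norm_sub_sq_real tH tV
    nlinarith [sq_nonneg (‖tH - tV‖)]
  have hip : ⟪tH, tV⟫_ℝ ≤ ‖tT‖ ^ 2 / 4 := by nlinarith
  -- assemble
  rw [SubmersionImmersion.deltaPi, hH2]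
  rw [← hT, ← hHs, ← hVs]
  rw [hτT, hτH, hτV]
  nlinarith [hQ, hip, hadd]

end
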